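/- Let μ : H_n → H_n be a trace-preserving linear operator (a Markovian) and P a Markov density such that the chain (μ, P) is bounded, i.e., there exists c with tr(μ^t(P)²) ≤ c for all t ≥ 0. Then the Cesàro limit P̃ = lim_{t→∞} (1/t)∑_{k=0}^{t-1} μ^k(P) exists, tr(P̃) = 1, and μ(P̃) = P̃. -/

import Mathlib

open scoped ComplexOrder

open Filter Finset

/-- The real vector space of Hermitian `n × n` complex matrices. -/
noncomputable abbrev HermMat (n : ℕ) := selfAdjoint (Matrix (Fin n) (Fin n) ℂ)

/-- The coercion of a Hermitian matrix to a matrix, as a real-linear map. -/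
noncomputable def hermVal (n : ℕ) : HermMat n →ₗ[ℝ] Matrix (Fin n) (Fin n) ℂ where
  toFun := Subtype.val
  map_add' _ _ := rfl
  map_smul' _ _ := rfl

lemma herm_entry_bound {n : ℕ} (A : Matrix (Fin n) (Fin n) ℂ) (hA : A.conjTranspose = A) (c : ℝ)
    (h : (A * A).trace ≤ (c : ℂ)) (i j : Fin n) : ‖A i j‖ ≤ Real.sqrt c := by
  have key : (A * A).trace = ((∑ i, ∑ j, Complex.normSq (A i j) : ℝ) : ℂ) := by
    simp only [Matrix.trace, Matrix.diag, Matrix.mul_apply]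
    push_cast
    congr 1; funext i; congr 1; funext j
    have hji : A j i = (starRingEnd ℂ) (A i j) := by
      conv_lhs => rw [← hA]
      simp [Matrix.conjTranspose_apply]
    rw [hji, Complex.mul_conj]
  rw [key, Complex.real_le_real] at h
  have h1 : Complex.normSq (A i j) ≤ c :=
    (Finset.single_le_sum (f := fun i => ∑ j, Complex.normSq (A i j))
      (fun _ _ => Finset.sum_nonneg fun _ _ => Complex.normSq_nonneg _)
      (Finset.mem_univ i)).trans' (Finset.single_le_sum
        (fun _ _ => Complex.normSq_nonneg _) (Finset.mem_univ j)) |>.trans h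
  have h2 : ‖A i j‖ ^ 2 ≤ c := by
    rw [Complex.sq_norm]; exact h1
  nlinarith [Real.sq_sqrt (h2.trans' (by positivity) : (0:ℝ) ≤ c), norm_nonneg (A i j),
    Real.sqrt_nonneg c]

set_option maxHeartbeats 1000000 in
theorem stmt10 {n : ℕ} (μ : HermMat n →ₗ[ℝ] HermMat n)
    (hMarkov : ∀ A : HermMat n,
      ((μ A : Matrix (Fin n) (Fin n) ℂ)).trace = (A : Matrix (Fin n) (Fin n) ℂ).trace)
    (P : HermMat n) (hP : (P : Matrix (Fin n) (Fin n) ℂ).trace = 1)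
    (hbdd : ∃ c : ℝ, ∀ t : ℕ,
      (((μ ^ t) P : Matrix (Fin n) (Fin n) ℂ) * ((μ ^ t) P : Matrix (Fin n) (Fin n) ℂ)).trace
        ≤ (c : ℂ)) :
    ∃ Pt : HermMat n,
      Tendsto (fun t : ℕ => (t : ℝ)⁻¹ • ∑ k ∈ Finset.range t, (μ ^ k) P) atTop (nhds Pt) ∧
      (Pt : Matrix (Fin n) (Fin n) ℂ).trace = 1 ∧ μ Pt = Pt := by
  classical
  obtain ⟨c, hc⟩ := hbdd
  set ι := hermVal n with hι
  have hιval : ∀ x : HermMat n, ι x = (x : Matrix (Fin n) (Fin n) ℂ) := fun _ => rfl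
  haveI : FiniteDimensional ℝ (HermMat n) :=
    FiniteDimensional.of_injective (hermVal n) Subtype.val_injective
  -- entrywise orbit bound for P
  have hPbd : ∀ t (i j : Fin n), ‖(ι ((μ ^ t) P)) i j‖ ≤ Real.sqrt c := by
    intro t i j
    refine herm_entry_bound _ ?_ c (hc t) i j
    rw [← Matrix.star_eq_conjTranspose]
    exact ((μ ^ t) P).2
  -- the invariant subspace spanned by the orbit
  set V : Submodule ℝ (HermMat n) := Submodule.span ℝ (Set.range fun k : ℕ => (μ ^ k) P)
    with hV
  have hPV : P ∈ V := Submodule.subset_span ⟨0, by simp⟩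
  have hVmap : ∀ x ∈ V, μ x ∈ V := by
    intro x hx
    induction hx using Submodule.span_induction with
    | mem x hx =>
      obtain ⟨k, rfl⟩ := hx
      refine Submodule.subset_span ⟨k + 1, ?_⟩
      show (μ ^ (k + 1)) P = μ ((μ ^ k) P)
      rw [pow_succ']; rfl
    | zero => simp
    | add x y _ _ hx hy => rw [map_add]; exact V.add_mem hx hy
    | smul a x _ hx => rw [map_smul]; exact V.smul_mem a hx
  -- entrywise orbit bound on all of V
  have hVbd : ∀ v ∈ V, ∃ C : ℝ, ∀ t (i j : Fin n), ‖(ι ((μ ^ t) v)) i j‖ ≤ C := by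
    intro v hv
    induction hv using Submodule.span_induction with
    | mem x hx =>
      obtain ⟨k, rfl⟩ := hx
      refine ⟨Real.sqrt c, fun t i j => ?_⟩
      have : (μ ^ t) ((μ ^ k) P) = (μ ^ (t + k)) P := by
        rw [pow_add]; rfl
      rw [this]; exact hPbd _ i j
    | zero => exact ⟨0, fun t i j => by simp⟩
    | add x y _ _ hx hy =>
      obtain ⟨C1, h1⟩ := hx; obtain ⟨C2, h2⟩ := hy
      refine ⟨C1 + C2, fun t i j => ?_⟩
      rw [map_add, map_add]
      calc ‖(ι ((μ ^ t) x) + ι ((μ ^ t) y)) i j‖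
          ≤ ‖(ι ((μ ^ t) x)) i j‖ + ‖(ι ((μ ^ t) y)) i j‖ := norm_add_le _ _
        _ ≤ C1 + C2 := add_le_add (h1 t i j) (h2 t i j)
    | smul a x _ hx =>
      obtain ⟨C, h1⟩ := hx
      refine ⟨|a| * C, fun t i j => ?_⟩
      have : (ι ((μ ^ t) (a • x))) i j = a • (ι ((μ ^ t) x)) i j := by
        rw [map_smul, map_smul]; rfl
      rw [this, norm_smul, Real.norm_eq_abs]
      exact mul_le_mul_of_nonneg_left (h1 t i j) (abs_nonneg a)
  -- restriction of μ to V, and the map f - id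
  set f : V →ₗ[ℝ] V := μ.restrict hVmap with hf
  set g : V →ₗ[ℝ] V := f - LinearMap.id with hg
  have hgapp : ∀ x : V, ((g x : HermMat n)) = μ (x : HermMat n) - (x : HermMat n) := by
    intro x; rfl
  -- ker g and range g are disjoint
  have hdisj : LinearMap.ker g ⊓ LinearMap.range g = ⊥ := by
    rw [Submodule.eq_bot_iff]
    rintro x ⟨hxk, y, rfl⟩
    have hxk' : g (g y) = 0 := hxk
    set X : HermMat n := ((g y : V) : HermMat n) with hX
    clear hxk
    set Y : HermMat n := (y : HermMat n) with hY
    have hXfix : μ X = X := by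
      have := congrArg (Subtype.val) hxk'
      rw [hgapp] at this
      have h0 : μ X - X = 0 := this
      linear_combination (norm := abel) h0
    have hXY : μ Y - Y = X := (hgapp y).symm
    obtain ⟨C, hC⟩ := hVbd Y y.2
    have hiter : ∀ t : ℕ, (μ ^ t) Y = Y + t • X := by
      intro t
      induction t with
      | zero => simp
      | succ t ih =>
        have h1 : (μ ^ (t + 1)) Y = μ ((μ ^ t) Y) := by rw [pow_succ']; rfl
        rw [h1, ih, map_add]
        have h2 : μ (t • X) = t • X := by rw [map_nsmul, hXfix]
        rw [h2]
        have h3 : μ Y = Y + X := by linear_combination (norm := abel) hXY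
        rw [h3, succ_nsmul]
        abel
    have hXent : ∀ i j : Fin n, (ι X) i j = 0 := by
      intro i j
      by_contra hne
      have hpos : 0 < ‖(ι X) i j‖ := lt_of_le_of_ne (norm_nonneg _) (Ne.symm (by simpa using hne))
      obtain ⟨t, ht⟩ := exists_nat_gt ((C + ‖(ι Y) i j‖) / ‖(ι X) i j‖)
      have hb : (t : ℝ) * ‖(ι X) i j‖ ≤ C + ‖(ι Y) i j‖ := by
        have h1 : (ι ((μ ^ t) Y)) i j = (ι Y) i j + (t : ℕ) • (ι X) i j := by
          rw [hiter t, map_add, map_nsmul]; rfl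
        have h2 : (t : ℕ) • (ι X) i j = (ι ((μ ^ t) Y)) i j - (ι Y) i j := by
          rw [h1, add_sub_cancel_left]
        have h3 : ‖(t : ℕ) • (ι X) i j‖ = (t : ℝ) * ‖(ι X) i j‖ := by
          rw [nsmul_eq_mul, norm_mul]; norm_num
        rw [← h3, h2]
        calc ‖(ι ((μ ^ t) Y)) i j - (ι Y) i j‖
            ≤ ‖(ι ((μ ^ t) Y)) i j‖ + ‖(ι Y) i j‖ := norm_sub_le _ _
          _ ≤ C + ‖(ι Y) i j‖ := by gcongr; exact hC t i j
      rw [div_lt_iff₀ hpos] at ht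
      linarith
    have hX0 : X = 0 := by
      apply Subtype.val_injective
      ext i j
      simpa [hιval] using hXent i j
    have hfin : ((g y : V) : HermMat n) = ((0 : V) : HermMat n) := by
      rw [← hX, hX0]; rfl
    exact Subtype.val_injective hfin
  -- ker g ⊔ range g = ⊤ by dimension count
  have hsup : LinearMap.ker g ⊔ LinearMap.range g = ⊤ := by
    apply Submodule.eq_top_of_finrank_eq
    have h1 := Submodule.finrank_sup_add_finrank_inf_eq (LinearMap.ker g) (LinearMap.range g)
    rw [hdisj, finrank_bot] at h1
    have h2 := LinearMap.finrank_range_add_finrank_ker g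
    omega
  -- decompose P
  obtain ⟨q, hq, r, hr, hqr⟩ := Submodule.mem_sup.mp
    (hsup ▸ Submodule.mem_top : (⟨P, hPV⟩ : V) ∈ LinearMap.ker g ⊔ LinearMap.range g)
  obtain ⟨w, rfl⟩ := hr
  set Q : HermMat n := (q : HermMat n) with hQ
  set R : HermMat n := ((w : V) : HermMat n) with hR
  have hQfix : μ Q = Q := by
    rw [LinearMap.mem_ker] at hq
    have := congrArg Subtype.val hq
    rw [hgapp] at this
    have h0 : μ Q - Q = 0 := this
    linear_combination (norm := abel) h0
  have hdecomp : P = Q + (μ R - R) := by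
    have := congrArg Subtype.val hqr
    rw [Submodule.coe_add, hgapp] at this
    exact this.symm
  have hQk : ∀ k : ℕ, (μ ^ k) Q = Q := by
    intro k
    induction k with
    | zero => rfl
    | succ k ih =>
      have h1 : (μ ^ (k + 1)) Q = μ ((μ ^ k) Q) := by rw [pow_succ']; rfl
      rw [h1, ih, hQfix]
  have hsum : ∀ t : ℕ, ∑ k ∈ Finset.range t, (μ ^ k) P = t • Q + ((μ ^ t) R - R) := by
    intro t
    have hterm : ∀ k : ℕ, (μ ^ k) P = Q + ((μ ^ (k + 1)) R - (μ ^ k) R) := by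
      intro k
      have h1 : (μ ^ (k + 1)) R = (μ ^ k) (μ R) := by rw [pow_succ]; rfl
      rw [hdecomp, map_add, map_sub, hQk, h1]
    rw [Finset.sum_congr rfl fun k _ => hterm k, Finset.sum_add_distrib, Finset.sum_const,
      Finset.card_range, Finset.sum_range_sub (fun k => (μ ^ k) R), pow_zero,
      Module.End.one_apply]
  obtain ⟨CR, hCR⟩ := hVbd R (w : V).2
  refine ⟨Q, ?_, ?_, hQfix⟩
  · -- convergence
    apply tendsto_subtype_rng.2
    refine tendsto_pi_nhds.2 fun i => tendsto_pi_nhds.2 fun j => ?_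
    have hkey : ∀ t : ℕ, 1 ≤ t →
        (ι ((t : ℝ)⁻¹ • ∑ k ∈ Finset.range t, (μ ^ k) P)) i j
          = (ι Q) i j + (t : ℝ)⁻¹ • ((ι ((μ ^ t) R)) i j - (ι R) i j) := by
      intro t ht
      have htne : (t : ℝ) ≠ 0 := Nat.cast_ne_zero.2 (by omega)
      have h1 : ((t : ℝ)⁻¹ • ∑ k ∈ Finset.range t, (μ ^ k) P)
          = Q + (t : ℝ)⁻¹ • ((μ ^ t) R - R) := by
        rw [hsum, smul_add, ← Nat.cast_smul_eq_nsmul ℝ, smul_smul, inv_mul_cancel₀ htne,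
          one_smul]
      rw [h1, map_add, map_smul, map_sub]
      rfl
    have hzero : Tendsto (fun t : ℕ =>
        (ι ((t : ℝ)⁻¹ • ∑ k ∈ Finset.range t, (μ ^ k) P)) i j - (ι Q) i j) atTop (nhds 0) := by
      apply squeeze_zero_norm' ?_ (tendsto_const_div_atTop_nhds_zero_nat (CR + ‖(ι R) i j‖))
      filter_upwards [eventually_ge_atTop 1] with t ht
      have htpos : (0:ℝ) < t := by exact_mod_cast Nat.lt_of_lt_of_le Nat.zero_lt_one ht
      rw [hkey t ht, add_sub_cancel_left, norm_smul, Real.norm_eq_abs,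
        abs_of_nonneg (inv_nonneg.2 htpos.le), inv_mul_eq_div]
      have h2 : ‖(ι ((μ ^ t) R)) i j - (ι R) i j‖ ≤ CR + ‖(ι R) i j‖ :=
        (norm_sub_le _ _).trans (by gcongr; exact hCR t i j)
      gcongr
    have := tendsto_sub_nhds_zero_iff.mp hzero
    exact this
  · -- trace
    have hcoe : (P : Matrix (Fin n) (Fin n) ℂ)
        = (Q : Matrix (Fin n) (Fin n) ℂ)
          + ((μ R : Matrix (Fin n) (Fin n) ℂ) - (R : Matrix (Fin n) (Fin n) ℂ)) := by
      rw [hdecomp]; rfl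
    rw [hcoe, Matrix.trace_add, Matrix.trace_sub, hMarkov R] at hP
    simpa using hP
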